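/- Let $\alpha_1, \alpha_2$ be nonzero monomials in $x, y$ with $\deg \alpha_i = b - a_i + k$ for $i=1,2$. Then the kernel of the map $(\alpha_1, \alpha_2) : \mathcal{O}_{\mathbb{P}^1}(a_1) \oplus \mathcal{O}_{\mathbb{P}^1}(a_2) \to \mathcal{O}_{\mathbb{P}^1}(b+k)$ is a line bundle of degree $a_1 + a_2 - b - k + \deg(\gcd(\alpha_1, \alpha_2))$. -/

import Mathlib

open MvPolynomial

/-- The homogeneous coordinate ring `ℂ[x,y]` of `ℙ¹`. -/
noncomputable abbrev R2 : Type := MvPolynomial (Fin 2) ℂ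

lemma coeff_monomial_mul_eq_zero (q s : Fin 2 →₀ ℕ) (y : R2) (h : ¬ q ≤ s) :
    coeff s (monomial q (1 : ℂ) * y) = 0 := by
  have h1 := MvPolynomial.monomial_mul_modMonomial q y
  have h2 := MvPolynomial.coeff_modMonomial_of_not_le (monomial q (1 : ℂ) * y) h
  rw [h1, coeff_zero] at h2
  exact h2.symm

lemma monomial_dvd_of_coeff (q : Fin 2 →₀ ℕ) (f : R2)
    (h : ∀ s, ¬ q ≤ s → coeff s f = 0) : monomial q (1 : ℂ) ∣ f := by
  rw [MvPolynomial.monomial_one_dvd_iff_modMonomial_eq_zero]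
  ext s
  by_cases hs : q ≤ s
  · rw [MvPolynomial.coeff_modMonomial_of_le _ hs, coeff_zero]
  · rw [MvPolynomial.coeff_modMonomial_of_not_le _ hs, h s hs, coeff_zero]

lemma monomial_dvd_aux (q p : Fin 2 →₀ ℕ) (f g : R2)
    (hdisj : ∀ i, q i ≠ 0 → p i = 0)
    (h : monomial p (1 : ℂ) * f = monomial q (1 : ℂ) * g) :
    monomial q (1 : ℂ) ∣ f := by
  apply monomial_dvd_of_coeff
  intro s hs
  obtain ⟨i, hi⟩ : ∃ i, ¬ q i ≤ s i := by
    by_contra hcon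
    push_neg at hcon
    exact hs fun i => hcon i
  have hqi : q i ≠ 0 := by omega
  have hpi : p i = 0 := hdisj i hqi
  have hcoeff : coeff (p + s) (monomial p (1 : ℂ) * f) = coeff s f := by
    rw [coeff_monomial_mul, one_mul]
  rw [h] at hcoeff
  rw [← hcoeff]
  apply coeff_monomial_mul_eq_zero
  intro hle
  have := hle i
  rw [Finsupp.add_apply, hpi, zero_add] at this
  exact hi this

/-- Let `α₁, α₂` be nonzero monomials in `x, y` with
`deg αᵢ = b - aᵢ + k`.  Then the kernel of
`(α₁, α₂) : O(a₁) ⊕ O(a₂) → O(b+k)` is a line bundle of degree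
`a₁ + a₂ - b - k + deg gcd(α₁, α₂)`.  On the level of graded
`ℂ[x,y]`-modules this says: the kernel of `(f,g) ↦ α₁ f + α₂ g` is freely
generated by a pair `(q, -p)` of monomials with `deg q = b - a₂ + k - r` and
`deg p = b - a₁ + k - r` where `r = deg gcd(α₁, α₂)`, so that the kernel line
bundle has degree `a₁ - deg q = a₁ + a₂ - b - k + r`. -/
theorem stmt10 (k a₁ a₂ b : ℤ) (e₁ e₂ : Fin 2 →₀ ℕ)
    (hd1 : ((e₁ 0 + e₁ 1 : ℕ) : ℤ) = b - a₁ + k)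
    (hd2 : ((e₂ 0 + e₂ 1 : ℕ) : ℤ) = b - a₂ + k) :
    ∃ q p : Fin 2 →₀ ℕ,
      ((q 0 + q 1 : ℕ) : ℤ)
          = b - a₂ + k - ((min (e₁ 0) (e₂ 0) + min (e₁ 1) (e₂ 1) : ℕ) : ℤ) ∧
      ((p 0 + p 1 : ℕ) : ℤ)
          = b - a₁ + k - ((min (e₁ 0) (e₂ 0) + min (e₁ 1) (e₂ 1) : ℕ) : ℤ) ∧
      LinearMap.ker
          (LinearMap.coprod (LinearMap.mulLeft R2 (monomial e₁ (1 : ℂ)))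
            (LinearMap.mulLeft R2 (monomial e₂ (1 : ℂ))))
        = LinearMap.range
            ((LinearMap.mulLeft R2 (monomial q (1 : ℂ))).prod
              (LinearMap.mulLeft R2 (-(monomial p (1 : ℂ))))) ∧
      a₁ - ((q 0 + q 1 : ℕ) : ℤ)
        = a₁ + a₂ - b - k + ((min (e₁ 0) (e₂ 0) + min (e₁ 1) (e₂ 1) : ℕ) : ℤ) := by
  set d : Fin 2 →₀ ℕ := e₁ ⊓ e₂ with hd
  have hdapp : ∀ i, d i = min (e₁ i) (e₂ i) := fun i => Finsupp.inf_apply _ _ _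
  set q : Fin 2 →₀ ℕ := e₂ - d with hqdef
  set p : Fin 2 →₀ ℕ := e₁ - d with hpdef
  have hqapp : ∀ i, q i = e₂ i - min (e₁ i) (e₂ i) := fun i => by
    rw [hqdef, Finsupp.tsub_apply, hdapp]
  have hpapp : ∀ i, p i = e₁ i - min (e₁ i) (e₂ i) := fun i => by
    rw [hpdef, Finsupp.tsub_apply, hdapp]
  refine ⟨q, p, ?_, ?_, ?_, ?_⟩
  · rw [hqapp 0, hqapp 1]; omega
  · rw [hpapp 0, hpapp 1]; omega
  · have he₁ : d + p = e₁ := by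
      ext i; rw [Finsupp.add_apply, hdapp, hpapp]; omega
    have he₂ : d + q = e₂ := by
      ext i; rw [Finsupp.add_apply, hdapp, hqapp]; omega
    have hmd : (monomial d (1 : ℂ) : R2) ≠ 0 := by simp [monomial_eq_zero]
    have hmq : (monomial q (1 : ℂ) : R2) ≠ 0 := by simp [monomial_eq_zero]
    ext ⟨f, g⟩
    simp only [LinearMap.mem_ker, LinearMap.coprod_apply, LinearMap.mulLeft_apply,
      LinearMap.mem_range, LinearMap.prod_apply, Function.prod, Prod.mk.injEq]
    constructor
    · intro h
      have hsplit : monomial d (1 : ℂ) *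
          (monomial p (1 : ℂ) * f + monomial q (1 : ℂ) * g) = 0 := by
        rw [mul_add, ← mul_assoc, ← mul_assoc, monomial_mul, monomial_mul, mul_one, he₁, he₂]
        exact h
      have hzero : monomial p (1 : ℂ) * f + monomial q (1 : ℂ) * g = 0 :=
        (mul_eq_zero.1 hsplit).resolve_left hmd
      have hpf : monomial p (1 : ℂ) * f = monomial q (1 : ℂ) * (-g) := by
        linear_combination hzero
      have hdisj : ∀ i, q i ≠ 0 → p i = 0 := by
        intro i hqi
        rw [hqapp i] at hqi
        rw [hpapp i]
        omega
      obtain ⟨t, ht⟩ := monomial_dvd_aux q p f (-g) hdisj hpf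
      refine ⟨t, ?_, ?_⟩
      · exact ht.symm
      · have h2 : monomial q (1 : ℂ) * (monomial p (1 : ℂ) * t)
            = monomial q (1 : ℂ) * (-g) := by
          rw [ht] at hpf
          linear_combination hpf
        have h3 := mul_left_cancel₀ hmq h2
        linear_combination -h3
    · rintro ⟨t, ht1, ht2⟩
      have hfe : e₁ + q = e₂ + p := Finsupp.ext fun i => by
        rw [Finsupp.add_apply, Finsupp.add_apply, hqapp, hpapp]; omega
      have hkey : (monomial e₁ (1 : ℂ) : R2) * monomial q 1
          = monomial e₂ (1 : ℂ) * monomial p 1 := by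
        rw [monomial_mul, monomial_mul, mul_one, hfe]
      rw [← ht1, ← ht2]
      linear_combination t * hkey
  · rw [hqapp 0, hqapp 1]; omega
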